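/- Let R be a noetherian commutative ring, J ⊆ R an ideal, and N a J-torsion R-module such that Ext^1_R(M, N) = 0 for every finitely generated J-torsion R-module M. Then N is an injective object of the category of J-torsion R-modules: every map from a J-torsion submodule of a J-torsion module into N extends to the whole module. -/

import Mathlib

/-!
STATEMENT 16: Let `R` be a noetherian commutative ring, `J ⊆ R` an ideal, and `N` a
`J`-torsion `R`-module such that `Ext^1_R(M, N) = 0` for every finitely generated
`J`-torsion `R`-module `M`.  Then `N` is an injective object of the category of
`J`-torsion `R`-modules: every map from a `J`-torsion submodule of a `J`-torsion module
into `N` extends to the whole module.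

Formalization notes.  The hypothesis `Ext^1_R(M, N) = 0` is expressed by its standard
equivalent: every short exact sequence `0 → N → X → M → 0` splits.
-/

universe u v

def IsTorsionByPowers {R : Type u} [CommRing R] (J : Ideal R)
    (M : Type v) [AddCommGroup M] [Module R M] : Prop :=
  ∀ m : M, ∃ n : ℕ, ∀ a ∈ J ^ n, a • m = 0

theorem step16 {R : Type u} [CommRing R] (J : Ideal R)
    (N : Type v) [AddCommGroup N] [Module R N]
    (hExt : ∀ (M : Type v) [AddCommGroup M] [Module R M],
      IsTorsionByPowers J M → Module.Finite R M →
      ∀ (X : Type v) [AddCommGroup X] [Module R X] (ι : N →ₗ[R] X) (p : X →ₗ[R] M),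
        Function.Injective ι → Function.Surjective p → LinearMap.range ι = LinearMap.ker p →
        ∃ s : M →ₗ[R] X, p.comp s = LinearMap.id)
    (M : Type v) [AddCommGroup M] [Module R M] (hM : IsTorsionByPowers J M)
    (p : Submodule R M) (h : p →ₗ[R] N) (x : M) :
    ∃ g : ↥(p ⊔ (R ∙ x)) →ₗ[R] N,
      ∀ m : p, g (Submodule.inclusion le_sup_left m) = h m := by
  classical
  set p' : Submodule R M := p ⊔ (R ∙ x) with hp'
  set p₀ : Submodule R p' := Submodule.comap p'.subtype p with hp₀
  set Q := p' ⧸ p₀ with hQ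
  have hxp' : x ∈ p' := Submodule.mem_sup_right (Submodule.mem_span_singleton_self x)
  -- Q is J-torsion
  have hQtors : IsTorsionByPowers J Q := by
    intro q
    obtain ⟨w, rfl⟩ := Submodule.Quotient.mk_surjective p₀ q
    obtain ⟨n, hn⟩ := hM (w : M)
    refine ⟨n, fun a ha => ?_⟩
    rw [← Submodule.Quotient.mk_smul]
    have : a • w = 0 := Subtype.ext (hn a ha)
    rw [this, Submodule.Quotient.mk_zero]
  -- Q is finitely generated (cyclic, generated by the class of x)
  have hQfin : Module.Finite R Q := by
    rw [Module.finite_def]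
    refine ⟨{Submodule.Quotient.mk ⟨x, hxp'⟩}, ?_⟩
    rw [eq_top_iff]
    rintro q -
    obtain ⟨w, rfl⟩ := Submodule.Quotient.mk_surjective p₀ q
    have hw : (w : M) ∈ p ⊔ (R ∙ x) := w.2
    rw [Submodule.mem_sup] at hw
    obtain ⟨y, hy, z, hz, hyz⟩ := hw
    rw [Submodule.mem_span_singleton] at hz
    obtain ⟨r, rfl⟩ := hz
    have : w = (⟨y, Submodule.mem_sup_left hy⟩ : p') + r • ⟨x, hxp'⟩ := by
      apply Subtype.ext; simpa using hyz.symm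
    rw [this, Submodule.Quotient.mk_add, Submodule.Quotient.mk_smul]
    have hy0 : (Submodule.Quotient.mk (⟨y, Submodule.mem_sup_left hy⟩ : p') : Q) = 0 := by
      rw [Submodule.Quotient.mk_eq_zero]
      exact hy
    rw [hy0, zero_add]
    exact Submodule.smul_mem _ r (Submodule.subset_span (by simp))
  -- the pushout
  set incl : p →ₗ[R] p' := Submodule.inclusion le_sup_left with hincl
  set k : p →ₗ[R] N × p' := h.prod (-incl) with hk
  set K := LinearMap.range k with hK
  set X0 := (N × p') ⧸ K with hX0
  set ι : N →ₗ[R] X0 := K.mkQ.comp (LinearMap.inl R N p') with hι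
  have hker : ∀ m : p, K.mkQ (k m) = 0 := fun m =>
    (Submodule.Quotient.mk_eq_zero _).2 ⟨m, rfl⟩
  set pm : X0 →ₗ[R] Q := K.liftQ (p₀.mkQ.comp (LinearMap.snd R N p')) (by
    rintro z ⟨m, rfl⟩
    simp only [LinearMap.mem_ker, LinearMap.comp_apply, LinearMap.snd_apply, hk,
      LinearMap.prod_apply, Function.prod, LinearMap.neg_apply]
    rw [map_neg, neg_eq_zero, Submodule.mkQ_apply, Submodule.Quotient.mk_eq_zero]
    exact m.2) with hpm
  have hιinj : Function.Injective ι := by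
    intro a b hab
    have : K.mkQ (a - b, 0) = 0 := by
      have : ((a, 0) : N × p') - (b, 0) = (a - b, 0) := by simp
      rw [← this, map_sub]
      simpa [hι] using sub_eq_zero.2 hab
    rw [Submodule.mkQ_apply, Submodule.Quotient.mk_eq_zero] at this
    obtain ⟨m, hm⟩ := this
    have hm2 : -incl m = 0 := congrArg Prod.snd hm
    have hm0 : m = 0 := by
      have := neg_eq_zero.1 hm2
      exact Submodule.inclusion_injective le_sup_left (by simpa using this)
    have hm1 : h m = a - b := congrArg Prod.fst hm
    rw [hm0, map_zero] at hm1
    exact sub_eq_zero.1 hm1.symm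
  have hpmsurj : Function.Surjective pm := by
    intro q
    obtain ⟨w, rfl⟩ := Submodule.Quotient.mk_surjective p₀ q
    refine ⟨K.mkQ (0, w), ?_⟩
    show K.liftQ (p₀.mkQ.comp (LinearMap.snd R N p')) _ (K.mkQ (0, w)) = _
    rw [Submodule.mkQ_apply, Submodule.liftQ_apply]
    simp
  have hrange : LinearMap.range ι = LinearMap.ker pm := by
    apply le_antisymm
    · rintro z ⟨n, rfl⟩
      show K.liftQ (p₀.mkQ.comp (LinearMap.snd R N p')) _ (ι n) = 0
      simp only [hι, LinearMap.comp_apply, LinearMap.inl_apply]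
      rw [Submodule.mkQ_apply, Submodule.liftQ_apply]
      simp
    · rintro z hz
      obtain ⟨⟨n, w⟩, rfl⟩ := Submodule.Quotient.mk_surjective K z
      have hz' : (p₀.mkQ w : Q) = 0 := by
        have := hz
        rw [LinearMap.mem_ker] at this
        have h2 : K.liftQ (p₀.mkQ.comp (LinearMap.snd R N p')) _
            (Submodule.Quotient.mk (n, w)) = 0 := this
        rw [Submodule.liftQ_apply] at h2
        simpa using h2
      rw [Submodule.mkQ_apply, Submodule.Quotient.mk_eq_zero] at hz'
      have hwp : (w : M) ∈ p := hz'
      set m : p := ⟨(w : M), hwp⟩ with hm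
      refine ⟨n + h m, ?_⟩
      have : ((n + h m, 0) : N × p') - (n, w) = k m := by
        apply Prod.ext
        · simp [hk]
        · simp only [hk, LinearMap.prod_apply, Function.prod, LinearMap.neg_apply]
          apply Subtype.ext
          simp [hincl, hm]
      have h2 : K.mkQ ((n + h m, 0) : N × p') = K.mkQ (n, w) := by
        rw [← sub_eq_zero, ← map_sub, this]
        exact hker m
      simpa [hι] using h2
  obtain ⟨s, hs⟩ := hExt Q hQtors hQfin X0 ι pm hιinj hpmsurj hrange
  -- retraction X0 → N
  set t : X0 →ₗ[R] X0 := LinearMap.id - s.comp pm with ht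
  have htmem : ∀ z : X0, t z ∈ LinearMap.range ι := by
    intro z
    rw [hrange]
    simp only [LinearMap.mem_ker, ht, LinearMap.sub_apply, LinearMap.id_apply,
      LinearMap.comp_apply, map_sub]
    have := LinearMap.congr_fun hs (pm z)
    simp only [LinearMap.comp_apply, LinearMap.id_apply] at this
    rw [this, sub_self]
  set e : N ≃ₗ[R] LinearMap.range ι := LinearEquiv.ofInjective ι hιinj with he
  set r : X0 →ₗ[R] N := e.symm.toLinearMap.comp (t.codRestrict (LinearMap.range ι) htmem) with hr
  have hrι : ∀ n : N, r (ι n) = n := by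
    intro n
    have htn : t (ι n) = ι n := by
      have : pm (ι n) = 0 := by
        have : ι n ∈ LinearMap.ker pm := hrange ▸ ⟨n, rfl⟩
        exact this
      simp [ht, this]
    have : (t.codRestrict (LinearMap.range ι) htmem) (ι n) = e n := by
      apply Subtype.ext
      simp [htn, he, LinearEquiv.ofInjective_apply]
    simp [hr, this]
  refine ⟨r.comp (K.mkQ.comp (LinearMap.inr R N p')), fun m => ?_⟩
  have : K.mkQ ((0, incl m) : N × p') = ι (h m) := by
    have hdiff : ((h m, 0) : N × p') - (0, incl m) = k m := by
      apply Prod.ext <;> simp [hk]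
    have := hker m
    rw [← hdiff, map_sub, sub_eq_zero] at this
    simpa [hι] using this.symm
  simp only [LinearMap.comp_apply, LinearMap.inr_apply]
  rw [show (Submodule.inclusion le_sup_left m : p') = incl m from rfl,
    show (LinearMap.inr R N p') (incl m) = ((0, incl m) : N × p') from rfl, this, hrι]

theorem statement16 {R : Type u} [CommRing R] [IsNoetherianRing R] (J : Ideal R)
    (N : Type v) [AddCommGroup N] [Module R N] (hN : IsTorsionByPowers J N)
    (hExt : ∀ (M : Type v) [AddCommGroup M] [Module R M],
      IsTorsionByPowers J M → Module.Finite R M →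
      ∀ (X : Type v) [AddCommGroup X] [Module R X] (ι : N →ₗ[R] X) (p : X →ₗ[R] M),
        Function.Injective ι → Function.Surjective p → LinearMap.range ι = LinearMap.ker p →
        ∃ s : M →ₗ[R] X, p.comp s = LinearMap.id) :
    ∀ (M : Type v) [AddCommGroup M] [Module R M], IsTorsionByPowers J M →
      ∀ (M' : Submodule R M) (f : M' →ₗ[R] N),
        ∃ g : M →ₗ[R] N, ∀ x : M', g x = f x := by
  intro M _ _ hM M' f
  classical
  set f₀ : M →ₗ.[R] N := ⟨M', f⟩ with hf₀
  obtain ⟨m, hfm, hmax⟩ := zorn_le_nonempty_Ici₀ f₀ (fun c _ hc y hy => by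
    exact ⟨LinearPMap.sSup c (hc.directedOn), fun z hz => LinearPMap.le_sSup _ hz⟩) f₀ le_rfl
  -- maximal partial map has full domain
  have hdom : m.domain = ⊤ := by
    by_contra hne
    obtain ⟨x, hx⟩ : ∃ x : M, x ∉ m.domain := by
      by_contra hall
      push_neg at hall
      exact hne (eq_top_iff.2 fun z _ => hall z)
    obtain ⟨g, hg⟩ := step16 J N hExt M hM m.domain m.toFun x
    set m' : M →ₗ.[R] N := ⟨m.domain ⊔ (R ∙ x), g⟩ with hm'
    have hle : m ≤ m' := by
      refine ⟨le_sup_left, fun u v huv => ?_⟩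
      have hv : v = Submodule.inclusion (le_sup_left : m.domain ≤ m.domain ⊔ (R ∙ x)) u :=
        Subtype.ext huv.symm
      rw [hv]
      exact (hg u).symm
    have hle' : m' ≤ m := hmax hle
    have : x ∈ m.domain := hle'.1 (Submodule.mem_sup_right (Submodule.mem_span_singleton_self x))
    exact hx this
  refine ⟨m.toFun.comp (LinearMap.codRestrict m.domain LinearMap.id
    (fun z => by rw [hdom]; trivial)), fun z => ?_⟩
  have := hfm.2 (x := z) (y := ⟨(z : M), by rw [hdom]; trivial⟩) rfl
  exact this.symm
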